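/- arXiv:2605.26909 — 2 statements merged into one kernel-verified Lean document; each statement's English description precedes it below -/
import Mathlib

section
/- Under the standing hypotheses, the sequence of reference values {R_k} is monotonically decreasing, one has φ(x^k) ≤ R_k ≤ R_0 = φ(x⁰) for all k, and both {R_k} and {φ(x^k)} converge to one and the same finite limit φ* ∈ ℝ. -/
open Set Filter Topology

noncomputable section

variable {E : Type*} [NormedAddCommGroup E] [InnerProductSpace ℝ E] [FiniteDimensional ℝ E]

open Classical in
/-- The indicator function of a set `M` (`0` on `M`, `+∞` elsewhere), with values in `EReal`. -/
def indicatorFun (M : Set E) (x : E) : EReal := if x ∈ M then 0 else ⊤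

/-- The Fréchet (regular) subdifferential of an extended-real-valued function `g` at `x`. -/
def frechetSubdiff (g : E → EReal) (x : E) : Set E :=
  {v | ∀ ε : ℝ, 0 < ε →
    ∀ᶠ y in 𝓝 x, g x + (((inner ℝ v (y - x) : ℝ) - ε * ‖y - x‖ : ℝ) : EReal) ≤ g y}

/-- The limiting (Mordukhovich) subdifferential of `g` at `x`. -/
def limitingSubdiff (g : E → EReal) (x : E) : Set E :=
  {v | ∃ xs vs : ℕ → E,
    Tendsto xs atTop (𝓝 x) ∧
    Tendsto (fun n => g (xs n)) atTop (𝓝 (g x)) ∧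
    (∀ n, vs n ∈ frechetSubdiff g (xs n)) ∧
    Tendsto vs atTop (𝓝 v)}

/-- The projectional limiting subdifferential of `g` at `x` relative to `M`:
the orthogonal projection onto the tangent space `T x` of the limiting
subdifferential of `g + δ_M` at `x`. -/
def projSubdiff (g : E → ℝ) (M : Set E) (T : E → Submodule ℝ E) (x : E) : Set E :=
  (fun v => ((Submodule.orthogonalProjection (T x) v : T x) : E)) ''
    limitingSubdiff (fun y => (g y : EReal) + indicatorFun M y) x

/-- `M ⊆ E` is a smooth embedded submanifold with tangent spaces `T x`: around each
point of `M` there is a `C¹` local defining function with surjective derivative at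
that point, and on `M` the tangent space is the kernel of the derivative. -/
def IsSubmanifold (M : Set E) (T : E → Submodule ℝ E) : Prop :=
  ∀ x ∈ M, ∃ (m : ℕ) (U : Set E) (F : E → (Fin m → ℝ)),
    IsOpen U ∧ x ∈ U ∧ ContDiffOn ℝ 1 F U ∧
    Function.Surjective ⇑(fderiv ℝ F x) ∧
    M ∩ U = {y ∈ U | F y = 0} ∧
    ∀ y ∈ M ∩ U, T y = LinearMap.ker ((fderiv ℝ F y : E →L[ℝ] (Fin m → ℝ)) : E →ₗ[ℝ] (Fin m → ℝ))

/-- A retraction on the submanifold `M` with tangent spaces `T`: a `C²` map on the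
tangent bundle with values in `M` such that `R_x(0) = x` and `DR_x(0) = id`. -/
structure Retraction (M : Set E) (T : E → Submodule ℝ E) where
  R : E → E → E
  mem_target : ∀ x ∈ M, ∀ ξ ∈ T x, R x ξ ∈ M
  map_zero : ∀ x ∈ M, R x 0 = x
  smooth : ContDiffOn ℝ 2 (fun p : E × E => R p.1 p.2) {p : E × E | p.1 ∈ M ∧ p.2 ∈ T p.1}
  deriv_id : ∀ x ∈ M, ∀ ξ ∈ T x, HasDerivAt (fun t : ℝ => R x (t • ξ)) ξ 0

/-- Assumption A1: a local nonsmooth descent property of `φ` along the retraction,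
together with local boundedness of the projectional subdifferential on `M`. -/
def AssumptionA1 (M : Set E) (T : E → Submodule ℝ E) (Ret : Retraction M T) (φ : E → ℝ) : Prop :=
  (∀ z ∈ M, ∃ κ > (0:ℝ), ∃ r > (0:ℝ), ∃ O : Set E, IsOpen O ∧ z ∈ O ∧
    ∀ x ∈ M ∩ O, ∀ ξ ∈ T x, ‖ξ‖ ≤ r → ∀ w ∈ projSubdiff φ M T x,
      φ (Ret.R x ξ) - (φ x + (inner ℝ w ξ : ℝ)) ≤ κ * ‖ξ‖ ^ 2) ∧
  (∀ z ∈ M, ∃ ρ > (0:ℝ), ∃ c : ℝ, ∀ x ∈ M, ‖x - z‖ < ρ →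
    ∀ w ∈ projSubdiff φ M T x, ‖w‖ ≤ c)

/-- A run of the nonmonotone subgradient method on the manifold `M`:
subgradients `w k`, directions `d k`, stepsizes `τ k` obtained by backtracking
from initial trial stepsizes `τhat k` (with `j k` backtracking steps), iterates
`x k` and reference values `Rv k` updated by the mean-rule with weights `p k`. -/
structure AlgSeq (M : Set E) (T : E → Submodule ℝ E) (Ret : Retraction M T) (φ : E → ℝ)
    (σ β τmin τmax pmin a b : ℝ) where
  x : ℕ → E
  w : ℕ → E
  d : ℕ → E
  τhat : ℕ → ℝ
  j : ℕ → ℕ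
  τ : ℕ → ℝ
  p : ℕ → ℝ
  Rv : ℕ → ℝ
  x_mem : ∀ k, x k ∈ M
  w_mem : ∀ k, w k ∈ projSubdiff φ M T (x k)
  w_ne : ∀ k, w k ≠ 0
  d_mem : ∀ k, d k ∈ T (x k)
  d_ne : ∀ k, d k ≠ 0
  descent : ∀ k, (inner ℝ (w k) (d k) : ℝ) ≤ -a * ‖d k‖ ^ 2
  dir_bound : ∀ k, ‖w k‖ ≤ b * ‖d k‖
  τhat_mem : ∀ k, τhat k ∈ Set.Icc τmin τmax
  τ_def : ∀ k, τ k = β ^ (j k) * τhat k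
  j_least : ∀ k, IsLeast {i : ℕ |
      φ (Ret.R (x k) ((β ^ i * τhat k) • d k)) ≤
        Rv k + σ * (β ^ i * τhat k) * (inner ℝ (w k) (d k) : ℝ)} (j k)
  x_succ : ∀ k, x (k + 1) = Ret.R (x k) (τ k • d k)
  p_mem : ∀ k, p (k + 1) ∈ Set.Icc pmin 1
  R_zero : Rv 0 = φ (x 0)
  R_succ : ∀ k, Rv (k + 1) = (1 - p (k + 1)) * Rv k + p (k + 1) * φ (x (k + 1))

/-- The reference values decrease monotonically, bound the function values, and both
sequences converge to one and the same finite limit. -/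
theorem stmt6
    (M : Set E) (T : E → Submodule ℝ E) (Ret : Retraction M T) (φ : E → ℝ)
    (σ β τmin τmax pmin a b : ℝ)
    (hσ : σ ∈ Set.Ioo (0:ℝ) 1) (hβ : β ∈ Set.Ioo (0:ℝ) 1)
    (hτmin : 0 < τmin) (hττ : τmin ≤ τmax)
    (hpmin : pmin ∈ Set.Ioc (0:ℝ) 1) (ha : 0 < a) (hb : 0 < b)
    (hM : IsSubmanifold M T)
    (hφcont : ContinuousOn φ M)
    (hφbdd : BddBelow (φ '' M))
    (hA1 : AssumptionA1 M T Ret φ)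
    (A : AlgSeq M T Ret φ σ β τmin τmax pmin a b)
    :
    Antitone A.Rv ∧
    (∀ k, φ (A.x k) ≤ A.Rv k ∧ A.Rv k ≤ A.Rv 0) ∧
    A.Rv 0 = φ (A.x 0) ∧
    ∃ φstar : ℝ, Tendsto A.Rv atTop (𝓝 φstar) ∧
      Tendsto (fun k => φ (A.x k)) atTop (𝓝 φstar) := by
  obtain ⟨hσ0, hσ1⟩ := hσ
  obtain ⟨hβ0, hβ1⟩ := hβ
  obtain ⟨hp0, hp1⟩ := hpmin
  -- positivity of stepsizes
  have hτpos : ∀ k, 0 < A.τ k := by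
    intro k
    rw [A.τ_def k]
    have h1 : 0 < β ^ (A.j k) := pow_pos hβ0 _
    have h2 : τmin ≤ A.τhat k := (A.τhat_mem k).1
    exact mul_pos h1 (lt_of_lt_of_le hτmin h2)
  -- inner product is negative
  have hinner : ∀ k, (inner ℝ (A.w k) (A.d k) : ℝ) < 0 := by
    intro k
    have hd : 0 < ‖A.d k‖ := norm_pos_iff.2 (A.d_ne k)
    have h := A.descent k
    nlinarith [mul_pos ha (pow_pos hd 2)]
  -- key: φ(x^{k+1}) ≤ Rv k
  have hkey : ∀ k, φ (A.x (k + 1)) ≤ A.Rv k := by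
    intro k
    have hj := (A.j_least k).1
    simp only [Set.mem_setOf_eq] at hj
    have hτ : A.τ k = β ^ (A.j k) * A.τhat k := A.τ_def k
    rw [A.x_succ k, hτ]
    calc φ (Ret.R (A.x k) ((β ^ (A.j k) * A.τhat k) • A.d k))
        ≤ A.Rv k + σ * (β ^ (A.j k) * A.τhat k) * (inner ℝ (A.w k) (A.d k) : ℝ) := hj
      _ ≤ A.Rv k := by
          have h1 : 0 < β ^ (A.j k) * A.τhat k := by rw [← hτ]; exact hτpos k
          have := mul_neg_of_pos_of_neg (mul_pos hσ0 h1) (hinner k)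
          nlinarith
  -- Rv decreasing
  have hRle : ∀ k, A.Rv (k + 1) ≤ A.Rv k := by
    intro k
    rw [A.R_succ k]
    obtain ⟨hpl, hpu⟩ := A.p_mem k
    have := hkey k
    nlinarith
  -- φ(x^k) ≤ Rv k
  have hφleR : ∀ k, φ (A.x k) ≤ A.Rv k := by
    intro k
    cases k with
    | zero => rw [A.R_zero]
    | succ n =>
      rw [A.R_succ n]
      obtain ⟨hpl, hpu⟩ := A.p_mem n
      have := hkey n
      nlinarith
  have hAnti : Antitone A.Rv := antitone_nat_of_succ_le hRle
  -- boundedness below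
  obtain ⟨c, hc⟩ := hφbdd
  have hcle : ∀ k, c ≤ A.Rv k := fun k =>
    le_trans (hc ⟨A.x k, A.x_mem k, rfl⟩) (hφleR k)
  have hBdd : BddBelow (Set.range A.Rv) := ⟨c, fun y ⟨k, hk⟩ => hk ▸ hcle k⟩
  have hRtend : Tendsto A.Rv atTop (𝓝 (⨅ k, A.Rv k)) := tendsto_atTop_ciInf hAnti hBdd
  set φstar := ⨅ k, A.Rv k with hφstar
  refine ⟨hAnti, fun k => ⟨hφleR k, hAnti (Nat.zero_le k)⟩, A.R_zero, φstar, hRtend, ?_⟩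
  -- squeeze for φ(x^{k+1})
  have hlow : ∀ k, A.Rv k - (A.Rv k - A.Rv (k + 1)) / pmin ≤ φ (A.x (k + 1)) := by
    intro k
    obtain ⟨hpl, hpu⟩ := A.p_mem k
    have hppos : 0 < A.p (k + 1) := lt_of_lt_of_le hp0 hpl
    have hR := A.R_succ k
    have h1 : A.Rv k - A.Rv (k + 1) = A.p (k + 1) * (A.Rv k - φ (A.x (k + 1))) := by
      rw [hR]; ring
    have h2 : A.Rv k - φ (A.x (k + 1)) ≤ (A.Rv k - A.Rv (k + 1)) / pmin := by
      rw [h1, mul_div_assoc]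
      have hnn : 0 ≤ A.Rv k - φ (A.x (k + 1)) := sub_nonneg.2 (hkey k)
      have : (1 : ℝ) ≤ A.p (k + 1) / pmin := (one_le_div hp0).2 hpl
      calc A.Rv k - φ (A.x (k + 1)) = 1 * (A.Rv k - φ (A.x (k + 1))) := (one_mul _).symm
        _ ≤ A.p (k + 1) / pmin * (A.Rv k - φ (A.x (k + 1))) :=
            mul_le_mul_of_nonneg_right this hnn
        _ = A.p (k + 1) * ((A.Rv k - φ (A.x (k + 1))) / pmin) := by ring
      -- note: need to match orientation; fix below
    linarith
  have hRtend' : Tendsto (fun k => A.Rv (k + 1)) atTop (𝓝 φstar) :=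
    hRtend.comp (tendsto_add_atTop_nat 1)
  have hlowtend : Tendsto (fun k => A.Rv k - (A.Rv k - A.Rv (k + 1)) / pmin) atTop (𝓝 φstar) := by
    have : Tendsto (fun k => (A.Rv k - A.Rv (k + 1)) / pmin) atTop (𝓝 ((φstar - φstar) / pmin)) :=
      (hRtend.sub hRtend').div_const pmin
    simpa using hRtend.sub this
  have hsq : Tendsto (fun k => φ (A.x (k + 1))) atTop (𝓝 φstar) :=
    tendsto_of_tendsto_of_tendsto_of_le_of_le hlowtend hRtend' hlow
      (fun k => hφleR (k + 1))
  exact (tendsto_add_atTop_iff_nat 1).1 hsq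

end
end

section
/- Under the standing hypotheses and the KL-setup data, suppose the entire sequence {x^k} converges to x* and Φ := φ + δ_M satisfies the KL property at x* with desingularization function χ(t) = c t^θ, c > 0, θ ∈ (0,1). With e := (1/α)·√(p_min σ a / τ_max) and ω := (e τ_C / (2 c θ b))², for all sufficiently large k it holds that φ(x^k) − φ(x*) ≤ (1/ω)^{1/(2(1−θ))} · (R_k − R_{k+1})^{1/(2(1−θ))}. -/
open Set Filter Topology

noncomputable section

variable {E : Type*} [NormedAddCommGroup E] [InnerProductSpace ℝ E] [FiniteDimensional ℝ E]

/-- The Kurdyka–Łojasiewicz property of `g` at `xstar` with constant `η`,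
neighborhood `U`, desingularization function `χ` and its derivative `χ'`. -/
def KLProperty (g : E → EReal) (xstar : E) (η : ℝ) (U : Set E) (χ χ' : ℝ → ℝ) : Prop :=
  0 < η ∧ U ∈ 𝓝 xstar ∧
  ContinuousOn χ (Set.Icc 0 η) ∧ ConcaveOn ℝ (Set.Icc 0 η) χ ∧ χ 0 = 0 ∧
  (∀ t ∈ Set.Icc (0:ℝ) η, 0 ≤ χ t) ∧
  (∀ t ∈ Set.Ioo (0:ℝ) η, HasDerivAt χ (χ' t) t) ∧
  ContinuousOn χ' (Set.Ioo 0 η) ∧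
  (∀ t ∈ Set.Ioo (0:ℝ) η, 0 < χ' t) ∧
  ∀ y, g xstar < g y → g y < g xstar + (η : EReal) → y ∈ U →
    1 ≤ χ' ((g y).toReal - (g xstar).toReal) * Metric.infDist 0 (limitingSubdiff g y)



set_option maxHeartbeats 1000000 in
set_option synthInstance.maxHeartbeats 400000 in
/-- If `A` is a surjective continuous linear map, then the inner ℝ product of a vector normal
to `ker A` against any `u` is controlled by `‖A u‖`. -/
lemma aux_inner_normal {m : ℕ} (A : E →L[ℝ] (Fin m → ℝ)) (hsurj : Function.Surjective ⇑A) :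
    ∃ C : ℝ, 0 ≤ C ∧ ∀ n ∈ (LinearMap.ker (A : E →ₗ[ℝ] (Fin m → ℝ)))ᗮ, ∀ u : E,
      |(inner ℝ n u : ℝ)| ≤ ‖n‖ * C * ‖A u‖ := by
  classical
  let K : Submodule ℝ E := LinearMap.ker (A : E →ₗ[ℝ] (Fin m → ℝ))
  let lin : (Kᗮ : Submodule ℝ E) →ₗ[ℝ] (Fin m → ℝ) :=
    (A : E →ₗ[ℝ] (Fin m → ℝ)).comp (Kᗮ.subtype)
  have hlin_apply : ∀ u : Kᗮ, lin u = A (u : E) := fun u => rfl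
  have hinj : Function.Injective lin := by
    intro u u' huu
    apply Subtype.ext
    have h0 : A ((u : E) - (u' : E)) = 0 := by
      rw [map_sub]
      rw [← hlin_apply, ← hlin_apply, huu, sub_self]
    have hmemK : ((u : E) - (u' : E)) ∈ K := LinearMap.mem_ker.mpr h0
    have hmemO : ((u : E) - (u' : E)) ∈ Kᗮ := sub_mem u.2 u'.2
    have h1 : (inner ℝ ((u : E) - (u' : E)) ((u : E) - (u' : E)) : ℝ) = 0 :=
      (Submodule.mem_orthogonal K _).mp hmemO _ hmemK
    have := inner_self_eq_zero.mp h1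
    exact sub_eq_zero.mp this
  have hsur : Function.Surjective lin := by
    intro z
    obtain ⟨u, hu⟩ := hsurj z
    refine ⟨⟨u - Submodule.orthogonalProjection K u, Submodule.sub_starProjection_mem_orthogonal u⟩, ?_⟩
    have hpm : ((Submodule.orthogonalProjection K u : K) : E) ∈ K := (Submodule.orthogonalProjection K u).2
    have h0 : A ((Submodule.orthogonalProjection K u : K) : E) = 0 := LinearMap.mem_ker.mp hpm
    show A (u - (Submodule.orthogonalProjection K u : K)) = z
    rw [map_sub, h0, sub_zero, hu]
  let elin := LinearEquiv.ofBijective lin ⟨hinj, hsur⟩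
  let S := LinearMap.toContinuousLinearMap (elin.symm : (Fin m → ℝ) →ₗ[ℝ] Kᗮ)
  refine ⟨‖S‖, S.opNorm_nonneg, ?_⟩
  intro n hn u
  have hbound : ∀ z : Fin m → ℝ, ‖((elin.symm z : Kᗮ) : E)‖ ≤ ‖S‖ * ‖z‖ := by
    intro z
    have h2 : (elin.symm z : Kᗮ) = S z := by simp [S]
    calc ‖((elin.symm z : Kᗮ) : E)‖ = ‖(elin.symm z : Kᗮ)‖ := rfl
      _ = ‖S z‖ := by rw [h2]
      _ ≤ ‖S‖ * ‖z‖ := S.le_opNorm z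
  have hA1 : A ((elin.symm (A u) : Kᗮ) : E) = A u := by
    have h2 : lin (elin.symm (A u)) = A u := by
      have := elin.apply_symm_apply (A u)
      exact this
    rw [← hlin_apply]
    exact h2
  have hAz : A (u - ((elin.symm (A u) : Kᗮ) : E)) = 0 := by
    rw [map_sub, hA1, sub_self]
  have hzK : (u - ((elin.symm (A u) : Kᗮ) : E)) ∈ K := LinearMap.mem_ker.mpr hAz
  have hinner0 : (inner ℝ n (u - ((elin.symm (A u) : Kᗮ) : E)) : ℝ) = 0 := by
    have := (Submodule.mem_orthogonal K n).mp hn _ hzK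
    rw [real_inner_comm] at this
    exact this
  have hsplit : (inner ℝ n u : ℝ) = (inner ℝ n (((elin.symm (A u) : Kᗮ)) : E) : ℝ) := by
    have hdecomp : u = (u - ((elin.symm (A u) : Kᗮ) : E)) + ((elin.symm (A u) : Kᗮ) : E) := by
      abel
    conv_lhs => rw [hdecomp]
    rw [inner_add_right, hinner0, zero_add]
  rw [hsplit]
  calc |(inner ℝ n (((elin.symm (A u) : Kᗮ)) : E) : ℝ)|
      ≤ ‖n‖ * ‖(((elin.symm (A u) : Kᗮ)) : E)‖ := abs_real_inner_le_norm _ _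
    _ ≤ ‖n‖ * (‖S‖ * ‖A u‖) := mul_le_mul_of_nonneg_left (hbound _) (norm_nonneg n)
    _ = ‖n‖ * ‖S‖ * ‖A u‖ := by ring


/-- Claim A: the Fréchet subdifferential of `φ + δ_M` at `x ∈ M` is closed under
subtracting vectors normal to the tangent space. -/
lemma frechet_sub_normal (M : Set E) (T : E → Submodule ℝ E) (hM : IsSubmanifold M T)
    (φ : E → ℝ) {x : E} (hx : x ∈ M) {v n : E} (hn : n ∈ (T x)ᗮ)
    (hv : v ∈ frechetSubdiff (fun y => (φ y : EReal) + indicatorFun M y) x) :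
    v - n ∈ frechetSubdiff (fun y => (φ y : EReal) + indicatorFun M y) x := by
  obtain ⟨m, U, F, hU, hxU, hF, hsurj, hMU, hT⟩ := hM x hx
  have hxMU : x ∈ M ∩ U := ⟨hx, hxU⟩
  have hker : T x = LinearMap.ker ((fderiv ℝ F x : E →L[ℝ] (Fin m → ℝ)) : E →ₗ[ℝ] (Fin m → ℝ)) := hT x hxMU
  obtain ⟨C, hC0, hC⟩ := aux_inner_normal (fderiv ℝ F x) hsurj
  have hn' : n ∈ (LinearMap.ker ((fderiv ℝ F x : E →L[ℝ] (Fin m → ℝ)) : E →ₗ[ℝ] (Fin m → ℝ)))ᗮ := hker ▸ hn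
  intro ε hε
  have hD1 : (0:ℝ) < ‖n‖ * C + 1 := by positivity
  set ε₂ : ℝ := ε / (2 * (‖n‖ * C + 1)) with hε₂
  have hε₂0 : 0 < ε₂ := by positivity
  have hDF : HasFDerivAt F (fderiv ℝ F x) x :=
    ((hF.differentiableOn one_ne_zero).differentiableAt (hU.mem_nhds hxU)).hasFDerivAt
  have h2 : ∀ᶠ y in 𝓝 x, ‖F y - F x - (fderiv ℝ F x) (y - x)‖ ≤ ε₂ * ‖y - x‖ :=
    (Asymptotics.isLittleO_iff.mp hDF.isLittleO) hε₂0
  have h3 : ∀ᶠ y in 𝓝 x, y ∈ U := hU.mem_nhds hxU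
  have h1 := hv (ε/2) (by positivity)
  filter_upwards [h1, h2, h3] with y hy1 hy2 hy3
  by_cases hyM : y ∈ M
  · have hFy : F y = 0 := by
      have : y ∈ {y ∈ U | F y = 0} := hMU ▸ ⟨hyM, hy3⟩
      exact this.2
    have hFx : F x = 0 := by
      have : x ∈ {y ∈ U | F y = 0} := hMU ▸ hxMU
      exact this.2
    have hAyx : ‖(fderiv ℝ F x) (y - x)‖ ≤ ε₂ * ‖y - x‖ := by
      have heq : F y - F x - (fderiv ℝ F x) (y - x) = -((fderiv ℝ F x) (y - x)) := by
        rw [hFy, hFx]; abel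
      rw [heq, norm_neg] at hy2
      exact hy2
    have hin : |(inner ℝ n (y - x) : ℝ)| ≤ (ε/2) * ‖y - x‖ := by
      calc |(inner ℝ n (y - x) : ℝ)| ≤ ‖n‖ * C * ‖(fderiv ℝ F x) (y - x)‖ := hC n hn' (y - x)
        _ ≤ ‖n‖ * C * (ε₂ * ‖y - x‖) := mul_le_mul_of_nonneg_left hAyx (by positivity)
        _ ≤ (‖n‖ * C + 1) * ε₂ * ‖y - x‖ := by
            have h := norm_nonneg (y - x)
            nlinarith [mul_nonneg (mul_nonneg (norm_nonneg n) hC0) (le_of_lt hε₂0)]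
        _ = (ε/2) * ‖y - x‖ := by
            rw [hε₂]; field_simp
    simp only [indicatorFun, if_pos hx, if_pos hyM, add_zero] at hy1 ⊢
    rw [← EReal.coe_add, EReal.coe_le_coe_iff] at hy1 ⊢
    have habs := abs_le.mp hin
    have hsub : (inner ℝ (v - n) (y - x) : ℝ) =
        (inner ℝ v (y - x) : ℝ) - (inner ℝ n (y - x) : ℝ) := inner_sub_left _ _ _
    have hkey : (inner ℝ (v - n) (y - x) : ℝ) - ε * ‖y - x‖ ≤
        (inner ℝ v (y - x) : ℝ) - ε / 2 * ‖y - x‖ := by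
      rw [hsub]; linarith
    linarith
  · simp only [indicatorFun, if_neg hyM]
    rw [EReal.add_top_of_ne_bot (by simp)]
    exact le_top


lemma tendsto_clm_apply' {X Y : Type*} [NormedAddCommGroup X] [NormedSpace ℝ X]
    [NormedAddCommGroup Y] [NormedSpace ℝ Y]
    {f : ℕ → (X →L[ℝ] Y)} {g : ℕ → X} {A : X →L[ℝ] Y} {u : X}
    (hf : Tendsto f atTop (𝓝 A)) (hg : Tendsto g atTop (𝓝 u)) :
    Tendsto (fun n => f n (g n)) atTop (𝓝 (A u)) :=
  ((isBoundedBilinearMap_apply (𝕜 := ℝ)).continuous.tendsto (A, u)).comp (hf.prodMk_nhds hg)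


set_option maxHeartbeats 1000000 in
set_option synthInstance.maxHeartbeats 400000 in
/-- Claim B: the orthogonal projection onto the tangent space of an element of the limiting
subdifferential of `φ + δ_M` at `x ∈ M` again belongs to the limiting subdifferential. -/
lemma limiting_proj_mem (M : Set E) (T : E → Submodule ℝ E) (hM : IsSubmanifold M T)
    (φ : E → ℝ) {x : E} (hx : x ∈ M) {v : E}
    (hv : v ∈ limitingSubdiff (fun y => (φ y : EReal) + indicatorFun M y) x) :
    ((Submodule.orthogonalProjection (T x) v : T x) : E) ∈
      limitingSubdiff (fun y => (φ y : EReal) + indicatorFun M y) x := by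
  classical
  obtain ⟨xs, vs, hxs, hgs, hfre, hvs⟩ := hv
  obtain ⟨m, U, F, hU, hxU, hF, hsurj, hMU, hT⟩ := hM x hx
  set g : E → EReal := fun y => (φ y : EReal) + indicatorFun M y with hgdef
  have hgx : g x = (φ x : EReal) := by simp [hgdef, indicatorFun, hx]
  -- setup: B, G, P
  let H := EuclideanSpace ℝ (Fin m)
  let e : (Fin m → ℝ) ≃L[ℝ] H := (EuclideanSpace.equiv (Fin m) ℝ).symm
  let B : E → (E →L[ℝ] H) := fun y => (e : (Fin m → ℝ) →L[ℝ] H).comp (fderiv ℝ F y)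
  have hkerB : ∀ y, LinearMap.ker ((B y : E →L[ℝ] H) : E →ₗ[ℝ] H) = LinearMap.ker ((fderiv ℝ F y : E →L[ℝ] (Fin m → ℝ)) : E →ₗ[ℝ] (Fin m → ℝ)) := by
    intro y
    ext u
    simp [B, LinearMap.mem_ker]
  have hBx_surj : Function.Surjective ⇑(B x) := by
    have hco : ⇑(B x) = ⇑e ∘ ⇑(fderiv ℝ F x) := rfl
    rw [hco]
    exact e.surjective.comp hsurj
  let G : E → (H →L[ℝ] H) := fun y => (B y).comp (ContinuousLinearMap.adjoint (B y))
  have hGself : ∀ y z, G y z = B y ((ContinuousLinearMap.adjoint (B y)) z) := fun _ _ => rfl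
  -- G x is a unit
  have hGinj : Function.Injective ⇑(G x) := by
    have hker0 : ∀ z, G x z = 0 → z = 0 := by
      intro z hz
      have h1 : (inner ℝ ((ContinuousLinearMap.adjoint (B x)) z)
          ((ContinuousLinearMap.adjoint (B x)) z) : ℝ) = (inner ℝ z (G x z) : ℝ) := by
        rw [ContinuousLinearMap.adjoint_inner_left]
        rfl
      have h2 : (ContinuousLinearMap.adjoint (B x)) z = 0 := by
        rw [hz, inner_zero_right] at h1
        exact inner_self_eq_zero.mp h1
      obtain ⟨u, hu⟩ := hBx_surj z
      have h3 : (inner ℝ z z : ℝ) = (inner ℝ ((ContinuousLinearMap.adjoint (B x)) z) u : ℝ) := by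
        rw [ContinuousLinearMap.adjoint_inner_left, hu]
      rw [h2, inner_zero_left] at h3
      exact inner_self_eq_zero.mp h3
    intro a b hab
    have : G x (a - b) = 0 := by rw [map_sub, hab, sub_self]
    have := hker0 _ this
    exact sub_eq_zero.mp this
  have hGsurj : Function.Surjective ⇑(G x) := by
    have h := (LinearMap.injective_iff_surjective
      (f := ((G x : H →L[ℝ] H) : H →ₗ[ℝ] H))).mp hGinj
    exact h
  let elin : H ≃ₗ[ℝ] H :=
    LinearEquiv.ofBijective ((G x : H →L[ℝ] H) : H →ₗ[ℝ] H) ⟨hGinj, hGsurj⟩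
  let eclm : H ≃L[ℝ] H := elin.toContinuousLinearEquiv
  have hGx_unit : IsUnit (G x) := by
    refine ⟨⟨G x, (eclm.symm : H →L[ℝ] H), ?_, ?_⟩, rfl⟩
    · refine ContinuousLinearMap.ext fun z => ?_
      rw [ContinuousLinearMap.mul_apply, ContinuousLinearMap.one_apply]
      have h1 : ((eclm.symm : H →L[ℝ] H) z) = elin.symm z := rfl
      rw [h1]
      exact elin.apply_symm_apply z
    · refine ContinuousLinearMap.ext fun z => ?_
      rw [ContinuousLinearMap.mul_apply, ContinuousLinearMap.one_apply]
      have h1 : ∀ w, ((eclm.symm : H →L[ℝ] H) w) = elin.symm w := fun _ => rfl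
      rw [h1]
      exact elin.symm_apply_apply z
  -- the projection formula
  let P : E → (E →L[ℝ] E) := fun y => ContinuousLinearMap.id ℝ E -
    (ContinuousLinearMap.adjoint (B y)).comp ((Ring.inverse (G y)).comp (B y))
  have hP_apply : ∀ y u, P y u =
      u - (ContinuousLinearMap.adjoint (B y)) ((Ring.inverse (G y)) ((B y) u)) :=
    fun _ _ => rfl
  have hP_proj : ∀ y, IsUnit (G y) → ∀ u : E,
      ((Submodule.orthogonalProjection (LinearMap.ker ((B y : E →L[ℝ] H) : E →ₗ[ℝ] H)) u : _) : E) = P y u := by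
    intro y hy u
    have hcancel : (G y) ((Ring.inverse (G y)) (B y u)) = B y u := by
      have h := Ring.mul_inverse_cancel (G y) hy
      calc (G y) ((Ring.inverse (G y)) (B y u))
          = ((G y) * Ring.inverse (G y)) (B y u) := by
            rw [ContinuousLinearMap.mul_apply]
        _ = B y u := by rw [h, ContinuousLinearMap.one_apply]
    have hmem : P y u ∈ LinearMap.ker ((B y : E →L[ℝ] H) : E →ₗ[ℝ] H) := by
      rw [LinearMap.mem_ker, ContinuousLinearMap.coe_coe, hP_apply, map_sub, ← hGself, hcancel, sub_self]
    have horth : u - P y u ∈ (LinearMap.ker ((B y : E →L[ℝ] H) : E →ₗ[ℝ] H))ᗮ := by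
      rw [hP_apply, sub_sub_cancel]
      rw [Submodule.mem_orthogonal]
      intro w hw
      rw [real_inner_comm, ContinuousLinearMap.adjoint_inner_left,
        (show B y w = 0 from LinearMap.mem_ker.mp hw), inner_zero_right]
    exact Submodule.eq_starProjection_of_mem_orthogonal hmem horth
  -- continuity facts
  have hfcont : ContinuousOn (fderiv ℝ F) U := hF.continuousOn_fderiv_of_isOpen hU le_rfl
  have hBcont : ContinuousOn B U := by
    have h1 : Continuous fun (A : E →L[ℝ] (Fin m → ℝ)) =>
        ((ContinuousLinearMap.compL ℝ E (Fin m → ℝ) H) (e : (Fin m → ℝ) →L[ℝ] H)) A :=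
      ((ContinuousLinearMap.compL ℝ E (Fin m → ℝ) H) (e : (Fin m → ℝ) →L[ℝ] H)).continuous
    have h2 : B = fun y =>
        ((ContinuousLinearMap.compL ℝ E (Fin m → ℝ) H) (e : (Fin m → ℝ) →L[ℝ] H))
          (fderiv ℝ F y) := by
      funext y
      simp [B, ContinuousLinearMap.compL_apply]
    rw [h2]
    exact h1.comp_continuousOn hfcont
  -- eventual properties of the sequence
  have hmemM : ∀ᶠ n in atTop, xs n ∈ M := by
    have hlt : ∀ᶠ n in atTop, g (xs n) < ⊤ := by
      refine hgs.eventually_lt_const ?_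
      rw [hgx]
      exact EReal.coe_lt_top _
    filter_upwards [hlt] with n hn
    by_contra hnM
    have : g (xs n) = ⊤ := by
      simp only [hgdef, indicatorFun, if_neg hnM]
      rw [EReal.add_top_of_ne_bot (by simp)]
    rw [this] at hn
    exact absurd hn (lt_irrefl _)
  have hmemU : ∀ᶠ n in atTop, xs n ∈ U := hxs.eventually (hU.mem_nhds hxU)
  have htB : Tendsto (fun n => B (xs n)) atTop (𝓝 (B x)) :=
    Filter.Tendsto.comp (hBcont.continuousAt (hU.mem_nhds hxU)) hxs
  have htadj : Tendsto (fun n => ContinuousLinearMap.adjoint (B (xs n))) atTop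
      (𝓝 (ContinuousLinearMap.adjoint (B x))) :=
    ((ContinuousLinearMap.adjoint :
      (E →L[ℝ] H) ≃ₗᵢ⋆[ℝ] (H →L[ℝ] E)).continuous.tendsto _).comp htB
  have htG : Tendsto (fun n => G (xs n)) atTop (𝓝 (G x)) := by
    have h1 : Tendsto (fun n => (ContinuousLinearMap.compL ℝ H E H) (B (xs n))) atTop
        (𝓝 ((ContinuousLinearMap.compL ℝ H E H) (B x))) :=
      Filter.Tendsto.comp ((ContinuousLinearMap.compL ℝ H E H).continuous.tendsto _) htB
    have h2 := tendsto_clm_apply' h1 htadj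
    simp only [ContinuousLinearMap.compL_apply] at h2
    exact h2
  have hunit_ev : ∀ᶠ n in atTop, IsUnit (G (xs n)) := by
    have : {z : H →L[ℝ] H | IsUnit z} ∈ 𝓝 (G x) := Units.isOpen.mem_nhds hGx_unit
    exact htG.eventually this
  obtain ⟨N, hN⟩ := eventually_atTop.mp ((hmemM.and hmemU).and hunit_ev)
  -- the shifted sequences
  set xs' : ℕ → E := fun n => xs (n + N) with hxs'def
  set vs' : ℕ → E := fun n => vs (n + N) with hvs'def
  have hprop : ∀ n, (xs' n ∈ M ∧ xs' n ∈ U) ∧ IsUnit (G (xs' n)) := fun n =>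
    hN (n + N) (Nat.le_add_left N n)
  set ws' : ℕ → E := fun n => ((Submodule.orthogonalProjection (T (xs' n)) (vs' n) : _) : E) with hws'def
  have hTker : ∀ n, T (xs' n) = LinearMap.ker ((B (xs' n) : E →L[ℝ] H) : E →ₗ[ℝ] H) := by
    intro n
    rw [hkerB]
    exact hT (xs' n) ⟨(hprop n).1.1, (hprop n).1.2⟩
  have hws_eq : ∀ n, ws' n = P (xs' n) (vs' n) := by
    intro n
    rw [hws'def]
    simp only
    rw [hTker n]
    exact hP_proj (xs' n) (hprop n).2 (vs' n)
  have hshift : Tendsto (fun n => n + N) atTop atTop := tendsto_add_atTop_nat N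
  refine ⟨xs', ws', hxs.comp hshift, hgs.comp hshift, ?_, ?_⟩
  · intro n
    have h1 : vs' n ∈ frechetSubdiff g (xs' n) := hfre (n + N)
    have h2 : (vs' n - ((Submodule.orthogonalProjection (T (xs' n)) (vs' n) : _) : E)) ∈
        (T (xs' n))ᗮ := Submodule.sub_starProjection_mem_orthogonal _
    have h3 := frechet_sub_normal M T hM φ (hprop n).1.1 h2 h1
    have h4 : vs' n - (vs' n - ((Submodule.orthogonalProjection (T (xs' n)) (vs' n) : _) : E)) =
        ws' n := by rw [hws'def]; abel
    rw [h4] at h3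
    exact h3
  · -- convergence of ws'
    have htB' : Tendsto (fun n => B (xs' n)) atTop (𝓝 (B x)) := htB.comp hshift
    have htadj' : Tendsto (fun n => ContinuousLinearMap.adjoint (B (xs' n))) atTop
        (𝓝 (ContinuousLinearMap.adjoint (B x))) := htadj.comp hshift
    have htG' : Tendsto (fun n => G (xs' n)) atTop (𝓝 (G x)) := htG.comp hshift
    have hvs'' : Tendsto vs' atTop (𝓝 v) := hvs.comp hshift
    have htinv : Tendsto (fun n => Ring.inverse (G (xs' n))) atTop
        (𝓝 (Ring.inverse (G x))) := by
      obtain ⟨u0, hu0⟩ := hGx_unit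
      have hca : ContinuousAt Ring.inverse (G x) := hu0 ▸ NormedRing.inverse_continuousAt u0
      exact hca.tendsto.comp htG'
    have t2 : Tendsto (fun n => B (xs' n) (vs' n)) atTop (𝓝 (B x v)) :=
      tendsto_clm_apply' htB' hvs''
    have t5 : Tendsto (fun n => (Ring.inverse (G (xs' n))) (B (xs' n) (vs' n))) atTop
        (𝓝 ((Ring.inverse (G x)) (B x v))) := tendsto_clm_apply' htinv t2
    have t6 : Tendsto (fun n => (ContinuousLinearMap.adjoint (B (xs' n)))
        ((Ring.inverse (G (xs' n))) (B (xs' n) (vs' n)))) atTop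
        (𝓝 ((ContinuousLinearMap.adjoint (B x)) ((Ring.inverse (G x)) (B x v)))) :=
      tendsto_clm_apply' htadj' t5
    have tfin : Tendsto (fun n => P (xs' n) (vs' n)) atTop (𝓝 (P x v)) := by
      simp only [hP_apply]
      exact hvs''.sub t6
    have hfinal : ((Submodule.orthogonalProjection (T x) v : _) : E) = P x v := by
      have hTx : T x = LinearMap.ker ((B x : E →L[ℝ] H) : E →ₗ[ℝ] H) := by
        rw [hkerB]
        exact hT x ⟨hx, hxU⟩
      rw [hTx]
      exact hP_proj x hGx_unit v
    rw [hfinal]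
    exact tfin.congr fun n => (hws_eq n).symm


lemma arith_omega (α X τC c θ b d : ℝ) (hα : α ≠ 0) (hc : c ≠ 0) (hθ : θ ≠ 0) (hb : b ≠ 0) :
    ((1 / α) * X * τC / (2 * c * θ * b)) ^ 2 * (c * θ * b * d) ^ 2 =
      X ^ 2 * τC ^ 2 * d ^ 2 / (4 * α ^ 2) := by
  field_simp
  ring

lemma arith_omega2 (s τmax τC α d : ℝ) (hτ : τmax ≠ 0) (hα : α ≠ 0) :
    s / τmax * τC ^ 2 * d ^ 2 / (4 * α ^ 2) = s * τC ^ 2 * d ^ 2 / (τmax * (4 * α ^ 2)) := by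
  field_simp

lemma arith_alpha_sq {α : ℝ} (hα1 : 1 ≤ α) : (1:ℝ) ≤ α ^ 2 := by nlinarith

lemma arith_frac (s τC dk τmax α : ℝ) (hs : 0 ≤ s) (hτC : 0 < τC) (hτmax : 0 < τmax)
    (hdk : 0 ≤ dk) (hττ : τC ≤ τmax) (hα2 : 1 ≤ α ^ 2) :
    s * τC ^ 2 * dk ^ 2 / (τmax * (4 * α ^ 2)) ≤ s * (τC * dk ^ 2) := by
  rw [div_le_iff₀ (by positivity)]
  nlinarith [mul_nonneg (mul_nonneg (mul_nonneg hs (sq_nonneg dk)) hτC.le)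
      (sub_nonneg.mpr hττ),
    mul_nonneg (mul_nonneg (mul_nonneg (mul_nonneg hs (sq_nonneg dk)) hτC.le)
      hτmax.le) (sub_nonneg.mpr (by nlinarith : (1:ℝ) ≤ 4 * α ^ 2))]

/-- The key estimate `φ(x^k) - φ(x*) ≤ (1/ω)^{1/(2(1-θ))} (R_k - R_{k+1})^{1/(2(1-θ))}`
with `e := (1/α)√(pmin σ a / τmax)` and `ω := (e τ_C / (2 c θ b))²`. -/
theorem stmt18
    (M : Set E) (T : E → Submodule ℝ E) (Ret : Retraction M T) (φ : E → ℝ)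
    (σ β τmin τmax pmin a b : ℝ)
    (hσ : σ ∈ Set.Ioo (0:ℝ) 1) (hβ : β ∈ Set.Ioo (0:ℝ) 1)
    (hτmin : 0 < τmin) (hττ : τmin ≤ τmax)
    (hpmin : pmin ∈ Set.Ioc (0:ℝ) 1) (ha : 0 < a) (hb : 0 < b)
    (hM : IsSubmanifold M T)
    (hφcont : ContinuousOn φ M)
    (hφbdd : BddBelow (φ '' M))
    (hA1 : AssumptionA1 M T Ret φ)
    (A : AlgSeq M T Ret φ σ β τmin τmax pmin a b)
    (xstar : E) (ψ : ℕ → ℕ) (hψ : StrictMono ψ)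
    (hacc : Tendsto (fun n => A.x (ψ n)) atTop (𝓝 xstar))
    (C : Set E) (hCM : C ⊆ M) (hCcomp : IsCompact C)
    (hCint : ∃ O : Set E, IsOpen O ∧ xstar ∈ O ∧ M ∩ O ⊆ C)
    (hCφ : ∀ y ∈ C, φ y ≤ A.Rv 0)
    (τC : ℝ) (hτC : 0 < τC) (hτCk : ∀ k, A.x k ∈ C → τC ≤ A.τ k)
    (α r : ℝ) (hα : 0 < α) (hr : 0 < r)
    (hretr : ∀ x ∈ C, ∀ ξ ∈ T x, ‖ξ‖ ≤ r → ‖Ret.R x ξ - x‖ ≤ α * ‖ξ‖)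
    (hconv : Tendsto A.x atTop (𝓝 xstar))
    (c θ : ℝ) (hc : 0 < c) (hθ : θ ∈ Set.Ioo (0 : ℝ) 1)
    (hKL : ∃ (η : ℝ) (U : Set E) (χ' : ℝ → ℝ),
      KLProperty (fun y => (φ y : EReal) + indicatorFun M y) xstar η U
        (fun t => c * t ^ θ) χ') :
    ∃ N : ℕ, ∀ k ≥ N,
      φ (A.x k) - φ xstar ≤
        (1 / (((1 / α) * Real.sqrt (pmin * σ * a / τmax) * τC / (2 * c * θ * b)) ^ 2))
            ^ (1 / (2 * (1 - θ))) *
          (A.Rv k - A.Rv (k + 1)) ^ (1 / (2 * (1 - θ))) := by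
  classical
  obtain ⟨η, U, χ', hKLp⟩ := hKL
  obtain ⟨hη, hUnhds, hχcont, hχconc, hχ0, hχnn, hχderiv, hχ'cont, hχ'pos, hKLineq⟩ := hKLp
  obtain ⟨O, hO, hxO, hMO⟩ := hCint
  have hτmax0 : (0:ℝ) < τmax := lt_of_lt_of_le hτmin hττ
  have hσ0 : (0:ℝ) < σ := hσ.1
  have hpmin0 : (0:ℝ) < pmin := hpmin.1
  have hθ0 : (0:ℝ) < θ := hθ.1
  have hθ1 : θ < 1 := hθ.2
  set g : E → EReal := fun y => (φ y : EReal) + indicatorFun M y with hgdef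
  -- nonnegativity of stepsizes
  have hτ0 : ∀ k, 0 ≤ A.τ k := by
    intro k
    rw [A.τ_def]
    exact mul_nonneg (pow_nonneg hβ.1.le _) (le_trans hτmin.le (A.τhat_mem k).1)
  -- the per-step decrease estimate
  have hDk : ∀ k, pmin * σ * a * (A.τ k * ‖A.d k‖ ^ 2) ≤ A.Rv k - A.Rv (k + 1) := by
    intro k
    have hjk := (A.j_least k).1
    simp only [Set.mem_setOf_eq] at hjk
    rw [← A.τ_def k] at hjk
    rw [← A.x_succ k] at hjk
    have hτk0 := hτ0 k
    have hp := A.p_mem k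
    have hp0 : 0 ≤ A.p (k + 1) := le_trans hpmin0.le hp.1
    have hdesc := A.descent k
    have h2 : σ * A.τ k * (inner ℝ (A.w k) (A.d k) : ℝ) ≤
        σ * A.τ k * (-a * ‖A.d k‖ ^ 2) :=
      mul_le_mul_of_nonneg_left hdesc (by positivity)
    have h3 : φ (A.x (k + 1)) ≤ A.Rv k - σ * A.τ k * a * ‖A.d k‖ ^ 2 := by
      have := hjk
      nlinarith [this, h2]
    have hY0 : 0 ≤ σ * A.τ k * a * ‖A.d k‖ ^ 2 := by positivity
    have h5 : φ (A.x (k + 1)) - A.Rv k ≤ -(σ * A.τ k * a * ‖A.d k‖ ^ 2) := by linarith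
    have h6 : A.p (k + 1) * (φ (A.x (k + 1)) - A.Rv k) ≤
        A.p (k + 1) * (-(σ * A.τ k * a * ‖A.d k‖ ^ 2)) :=
      mul_le_mul_of_nonneg_left h5 hp0
    have h7 : A.p (k + 1) * (-(σ * A.τ k * a * ‖A.d k‖ ^ 2)) ≤
        pmin * (-(σ * A.τ k * a * ‖A.d k‖ ^ 2)) := by
      apply mul_le_mul_of_nonpos_right hp.1
      linarith
    have h8 := A.R_succ k
    nlinarith [h6, h7, h8]
  -- eventual facts
  have hevC : ∀ᶠ k in atTop, A.x k ∈ C := by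
    filter_upwards [hconv.eventually (hO.mem_nhds hxO)] with k hk
    exact hMO ⟨A.x_mem k, hk⟩
  have hxC : xstar ∈ C := hCcomp.isClosed.mem_of_tendsto hconv hevC
  have hxM : xstar ∈ M := hCM hxC
  have hgstar : g xstar = (φ xstar : EReal) := by simp [hgdef, indicatorFun, hxM]
  have hevU : ∀ᶠ k in atTop, A.x k ∈ U := hconv.eventually hUnhds
  have htphi : Tendsto (fun k => φ (A.x k)) atTop (𝓝 (φ xstar)) := by
    have h1 : Tendsto A.x atTop (𝓝[M] xstar) :=
      tendsto_nhdsWithin_iff.mpr ⟨hconv, Eventually.of_forall A.x_mem⟩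
    exact (hφcont xstar hxM).tendsto.comp h1
  have hevη : ∀ᶠ k in atTop, φ (A.x k) - φ xstar < η := by
    have h1 : Tendsto (fun k => φ (A.x k) - φ xstar) atTop (𝓝 (φ xstar - φ xstar)) :=
      htphi.sub_const _
    rw [sub_self] at h1
    exact h1.eventually_lt_const hη
  -- α ≥ 1
  obtain ⟨k₀, hk₀⟩ := hevC.exists
  have hα1 : 1 ≤ α := by
    set x0 := A.x k₀ with hx0
    have hx0M : x0 ∈ M := A.x_mem k₀
    set ξ := A.d k₀ with hξ
    have hξT : ξ ∈ T x0 := A.d_mem k₀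
    have hξ0 : ξ ≠ 0 := A.d_ne k₀
    have hξn : 0 < ‖ξ‖ := norm_pos_iff.mpr hξ0
    have hd := Ret.deriv_id x0 hx0M ξ hξT
    have hslope := hasDerivAt_iff_tendsto_slope.mp hd
    have hmono : 𝓝[>] (0:ℝ) ≤ 𝓝[≠] (0:ℝ) :=
      nhdsWithin_mono 0 (fun t (ht : t ∈ Ioi (0:ℝ)) => ne_of_gt ht)
    have hnorm : Tendsto (fun t => ‖slope (fun t : ℝ => Ret.R x0 (t • ξ)) 0 t‖)
        (𝓝[>] (0:ℝ)) (𝓝 ‖ξ‖) := (hslope.mono_left hmono).norm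
    have hδ : 0 < r / ‖ξ‖ := div_pos hr hξn
    have hev : ∀ᶠ t in 𝓝[>] (0:ℝ),
        ‖slope (fun t : ℝ => Ret.R x0 (t • ξ)) 0 t‖ ≤ α * ‖ξ‖ := by
      filter_upwards [Ioo_mem_nhdsGT_of_mem (Set.mem_Ico.mpr ⟨le_refl (0:ℝ), hδ⟩)]
        with t ht
      obtain ⟨ht0, htδ⟩ := ht
      have hnt : ‖t • ξ‖ = t * ‖ξ‖ := by
        rw [norm_smul, Real.norm_eq_abs, abs_of_pos ht0]
      have hle : ‖t • ξ‖ ≤ r := by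
        rw [hnt]
        calc t * ‖ξ‖ ≤ (r / ‖ξ‖) * ‖ξ‖ := mul_le_mul_of_nonneg_right htδ.le hξn.le
          _ = r := by field_simp
      have hretr' := hretr x0 hk₀ (t • ξ) (Submodule.smul_mem _ t hξT) hle
      have hR0 : Ret.R x0 ((0:ℝ) • ξ) = x0 := by
        rw [zero_smul]
        exact Ret.map_zero x0 hx0M
      have hs : slope (fun t : ℝ => Ret.R x0 (t • ξ)) 0 t =
          t⁻¹ • (Ret.R x0 (t • ξ) - x0) := by
        rw [slope_def_module, hR0, sub_zero]
      rw [hs, norm_smul, Real.norm_eq_abs, abs_of_pos (inv_pos.mpr ht0)]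
      calc t⁻¹ * ‖Ret.R x0 (t • ξ) - x0‖ ≤ t⁻¹ * (α * ‖t • ξ‖) :=
            mul_le_mul_of_nonneg_left hretr' (inv_pos.mpr ht0).le
        _ = t⁻¹ * (α * (t * ‖ξ‖)) := by rw [hnt]
        _ = α * ‖ξ‖ := by field_simp
    have hlim : ‖ξ‖ ≤ α * ‖ξ‖ := le_of_tendsto hnorm hev
    nlinarith [hlim, hξn]
  -- τC ≤ τmax
  have hτCτmax : τC ≤ τmax := by
    have h1 : τC ≤ A.τ k₀ := hτCk k₀ hk₀
    have h2 : A.τ k₀ ≤ τmax := by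
      rw [A.τ_def]
      have hb1 : β ^ (A.j k₀) ≤ 1 := pow_le_one₀ hβ.1.le hβ.2.le
      have ht0 : 0 ≤ A.τhat k₀ := le_trans hτmin.le (A.τhat_mem k₀).1
      calc β ^ (A.j k₀) * A.τhat k₀ ≤ 1 * A.τhat k₀ :=
            mul_le_mul_of_nonneg_right hb1 ht0
        _ = A.τhat k₀ := one_mul _
        _ ≤ τmax := (A.τhat_mem k₀).2
    linarith
  -- abbreviations (opaque, to avoid defeq unfolding)
  have hs0 : (0:ℝ) < pmin * σ * a := by positivity
  obtain ⟨X, hXdef⟩ : ∃ X : ℝ, X = Real.sqrt (pmin * σ * a / τmax) := ⟨_, rfl⟩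
  have hX0 : 0 < X := by
    rw [hXdef]
    exact Real.sqrt_pos.mpr (by positivity)
  have hX2 : X ^ 2 = pmin * σ * a / τmax := by
    rw [hXdef]
    exact Real.sq_sqrt (by positivity)
  have hα0 : (0:ℝ) < α := hα
  obtain ⟨ω, hωdef⟩ : ∃ ω : ℝ, ω = ((1 / α) * X * τC / (2 * c * θ * b)) ^ 2 := ⟨_, rfl⟩
  have hω0 : 0 < ω := by
    rw [hωdef]
    positivity
  obtain ⟨q, hqdef⟩ : ∃ q : ℝ, q = 1 / (2 * (1 - θ)) := ⟨_, rfl⟩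
  have h2θ : (0:ℝ) < 2 * (1 - θ) := by nlinarith
  have hq0 : 0 < q := by
    rw [hqdef]
    positivity
  -- assemble the eventual index
  obtain ⟨N, hN⟩ := eventually_atTop.mp ((hevC.and hevU).and hevη)
  refine ⟨N, fun k hk => ?_⟩
  obtain ⟨⟨hkC, hkU⟩, hkη⟩ := hN k hk
  rw [← hXdef, ← hωdef, ← hqdef]
  obtain ⟨t, htdef⟩ : ∃ t : ℝ, t = φ (A.x k) - φ xstar := ⟨_, rfl⟩
  obtain ⟨Dk, hDkdef⟩ : ∃ D : ℝ, D = A.Rv k - A.Rv (k + 1) := ⟨_, rfl⟩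
  rw [← htdef, ← hDkdef]
  rw [← htdef] at hkη
  have hDk' : pmin * σ * a * (A.τ k * ‖A.d k‖ ^ 2) ≤ Dk := by
    rw [hDkdef]
    exact hDk k
  have hDk0 : 0 ≤ Dk := by
    have h2 : 0 ≤ pmin * σ * a * (A.τ k * ‖A.d k‖ ^ 2) := by
      have := hτ0 k
      positivity
    linarith
  have hRHS0 : 0 ≤ (1 / ω) ^ q * Dk ^ q :=
    mul_nonneg (Real.rpow_nonneg (by positivity) _) (Real.rpow_nonneg hDk0 _)
  rcases le_or_gt t 0 with ht | ht
  · calc t ≤ 0 := ht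
      _ ≤ (1 / ω) ^ q * Dk ^ q := hRHS0
  · -- apply the KL inequality at x^k
    have hkM : A.x k ∈ M := A.x_mem k
    have hgy : g (A.x k) = (φ (A.x k) : EReal) := by simp [hgdef, indicatorFun, hkM]
    have ht' : 0 < φ (A.x k) - φ xstar := by
      rw [← htdef]
      exact ht
    have hlt1 : g xstar < g (A.x k) := by
      rw [hgstar, hgy, EReal.coe_lt_coe_iff]
      linarith
    have hlt2 : g (A.x k) < g xstar + (η : EReal) := by
      rw [hgstar, hgy, ← EReal.coe_add, EReal.coe_lt_coe_iff]
      have hkη' := hkη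
      rw [htdef] at hkη'
      linarith
    have hKLy := hKLineq (A.x k) hlt1 hlt2 hkU
    have harg : (g (A.x k)).toReal - (g xstar).toReal = t := by
      rw [hgy, hgstar, EReal.toReal_coe, EReal.toReal_coe, htdef]
    rw [harg] at hKLy
    -- the subgradient bound
    obtain ⟨v, hvmem, hveq⟩ := A.w_mem k
    have hwk_mem : A.w k ∈ limitingSubdiff g (A.x k) := by
      rw [← hveq]
      exact limiting_proj_mem M T hM φ hkM hvmem
    have hdist : Metric.infDist (0:E) (limitingSubdiff g (A.x k)) ≤ ‖A.w k‖ := by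
      have h1 := Metric.infDist_le_dist_of_mem (x := (0:E)) hwk_mem
      rwa [dist_zero_left] at h1
    have htη : t ∈ Set.Ioo (0:ℝ) η := ⟨ht, hkη⟩
    have hχ'post := hχ'pos t htη
    have hd1 : HasDerivAt (fun u : ℝ => c * u ^ θ) (χ' t) t := hχderiv t htη
    have hd2 : HasDerivAt (fun u : ℝ => c * u ^ θ) (c * (θ * t ^ (θ - 1))) t :=
      (Real.hasDerivAt_rpow_const (Or.inl (ne_of_gt ht))).const_mul c
    have hχ'val : χ' t = c * (θ * t ^ (θ - 1)) := hd1.unique hd2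
    have h1 : 1 ≤ c * (θ * t ^ (θ - 1)) * ‖A.w k‖ := by
      calc (1:ℝ) ≤ χ' t * Metric.infDist (0:E) (limitingSubdiff g (A.x k)) := hKLy
        _ ≤ χ' t * ‖A.w k‖ := mul_le_mul_of_nonneg_left hdist hχ'post.le
        _ = c * (θ * t ^ (θ - 1)) * ‖A.w k‖ := by rw [hχ'val]
    have ht1θ0 : 0 ≤ t ^ (1 - θ) := Real.rpow_nonneg ht.le _
    have hkey1 : t ^ (1 - θ) ≤ c * θ * ‖A.w k‖ := by
      have h2 : t ^ (1 - θ) * 1 ≤ t ^ (1 - θ) * (c * (θ * t ^ (θ - 1)) * ‖A.w k‖) :=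
        mul_le_mul_of_nonneg_left h1 ht1θ0
      have h3 : t ^ (1 - θ) * t ^ (θ - 1) = 1 := by
        rw [← Real.rpow_add ht]
        norm_num
      calc t ^ (1 - θ) = t ^ (1 - θ) * 1 := (mul_one _).symm
        _ ≤ t ^ (1 - θ) * (c * (θ * t ^ (θ - 1)) * ‖A.w k‖) := h2
        _ = (t ^ (1 - θ) * t ^ (θ - 1)) * (c * θ * ‖A.w k‖) := by ring
        _ = c * θ * ‖A.w k‖ := by rw [h3, one_mul]
    have hkey2 : t ^ (1 - θ) ≤ c * θ * b * ‖A.d k‖ := by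
      calc t ^ (1 - θ) ≤ c * θ * ‖A.w k‖ := hkey1
        _ ≤ c * θ * (b * ‖A.d k‖) :=
            mul_le_mul_of_nonneg_left (A.dir_bound k) (by positivity)
        _ = c * θ * b * ‖A.d k‖ := by ring
    have hdk0 : (0:ℝ) ≤ ‖A.d k‖ := norm_nonneg _
    -- D_k lower bound with τC
    have hτkC : τC ≤ A.τ k := hτCk k hkC
    have hDk1 : pmin * σ * a * (τC * ‖A.d k‖ ^ 2) ≤ Dk := by
      have h2 : pmin * σ * a * (τC * ‖A.d k‖ ^ 2) ≤
          pmin * σ * a * (A.τ k * ‖A.d k‖ ^ 2) := by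
        apply mul_le_mul_of_nonneg_left _ hs0.le
        apply mul_le_mul_of_nonneg_right hτkC (by positivity)
      linarith
    -- the core estimate
    have ht2eq : t ^ (2 * (1 - θ)) = (t ^ (1 - θ)) ^ (2:ℕ) := by
      rw [show (2 * (1 - θ)) = (1 - θ) * 2 by ring, Real.rpow_mul ht.le,
        show ((2:ℝ) = ((2:ℕ):ℝ)) by norm_num, Real.rpow_natCast]
    have hsq : (t ^ (1 - θ)) ^ (2:ℕ) ≤ (c * θ * b * ‖A.d k‖) ^ (2:ℕ) :=
      pow_le_pow_left₀ ht1θ0 hkey2 2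
    have hcθb : c * θ * b ≠ 0 := by positivity
    have hαne : α ≠ 0 := ne_of_gt hα0
    have hωeq1 : ω * (c * θ * b * ‖A.d k‖) ^ (2:ℕ) =
        X ^ 2 * τC ^ 2 * ‖A.d k‖ ^ 2 / (4 * α ^ 2) := by
      rw [hωdef]
      exact arith_omega α X τC c θ b ‖A.d k‖ hαne (ne_of_gt hc) (ne_of_gt hθ0)
        (ne_of_gt hb)
    have hωeq : ω * (c * θ * b * ‖A.d k‖) ^ (2:ℕ) =
        pmin * σ * a * τC ^ 2 * ‖A.d k‖ ^ 2 / (τmax * (4 * α ^ 2)) := by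
      rw [hωeq1, hX2]
      exact arith_omega2 (pmin * σ * a) τmax τC α ‖A.d k‖ (ne_of_gt hτmax0) hαne
    have hα2 : (1:ℝ) ≤ α ^ 2 := arith_alpha_sq hα1
    have hfrac : pmin * σ * a * τC ^ 2 * ‖A.d k‖ ^ 2 / (τmax * (4 * α ^ 2)) ≤
        pmin * σ * a * (τC * ‖A.d k‖ ^ 2) :=
      arith_frac (pmin * σ * a) τC ‖A.d k‖ τmax α hs0.le hτC hτmax0
        (norm_nonneg _) hτCτmax hα2
    have hcore : ω * t ^ (2 * (1 - θ)) ≤ Dk := by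
      calc ω * t ^ (2 * (1 - θ)) = ω * (t ^ (1 - θ)) ^ (2:ℕ) := by rw [ht2eq]
        _ ≤ ω * (c * θ * b * ‖A.d k‖) ^ (2:ℕ) := mul_le_mul_of_nonneg_left hsq hω0.le
        _ = pmin * σ * a * τC ^ 2 * ‖A.d k‖ ^ 2 / (τmax * (4 * α ^ 2)) := hωeq
        _ ≤ pmin * σ * a * (τC * ‖A.d k‖ ^ 2) := hfrac
        _ ≤ Dk := hDk1
    -- conclude via rpow manipulation
    have ht21 : t ^ (2 * (1 - θ)) ≤ Dk / ω := by
      rw [le_div_iff₀ hω0]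
      calc t ^ (2 * (1 - θ)) * ω = ω * t ^ (2 * (1 - θ)) := by ring
        _ ≤ Dk := hcore
    have hmain := Real.rpow_le_rpow (Real.rpow_nonneg ht.le _) ht21 hq0.le
    have hL : (t ^ (2 * (1 - θ))) ^ q = t := by
      rw [← Real.rpow_mul ht.le]
      have h5 : 2 * (1 - θ) * q = 1 := by
        rw [hqdef]
        exact mul_one_div_cancel (ne_of_gt h2θ)
      rw [h5, Real.rpow_one]
    have hR : (Dk / ω) ^ q = (1 / ω) ^ q * Dk ^ q := by
      rw [← one_div_mul_eq_div, Real.mul_rpow (by positivity) hDk0]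
    rw [hL, hR] at hmain
    exact hmain
end
end
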